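/- If an ordered set partition π of [n] word-avoids the pattern 132, then for each i, max(B_i) > min(B_{i+1}) implies min(B_i) > min(B_{i+1}); consequently des(π) = mindes(π) for every 132-word-avoiding ordered set partition. -/

import Mathlib

/-- The word of an ordered set partition: concatenate the blocks,
listing the elements of each block in increasing order. -/
def word (π : List (Finset ℕ)) : List ℕ :=
  (π.map (fun B : Finset ℕ => Finset.sort B (· ≤ ·))).flatten

/-- `π` is an ordered set partition of `[n] = {1,…,n}`: a list of nonempty,
pairwise disjoint finsets whose union is `{1,…,n}`. -/
def IsOSP (n : ℕ) (π : List (Finset ℕ)) : Prop :=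
  (∀ B ∈ π, B.Nonempty) ∧ π.Pairwise Disjoint ∧
    π.foldr (· ∪ ·) ∅ = Finset.Icc 1 n

noncomputable def minB (B : Finset ℕ) : ℕ := sInf (B : Set ℕ)
def maxB (B : Finset ℕ) : ℕ := B.sup id

/-- number of descents of a word -/
def desCount (w : List ℕ) : ℕ :=
  ((List.range (w.length - 1)).filter (fun i => w.getD (i + 1) 0 < w.getD i 0)).length

noncomputable def mindes (π : List (Finset ℕ)) : ℕ :=
  ((List.range (π.length - 1)).filter
    (fun i => minB (π.getD (i + 1) ∅) < minB (π.getD i ∅))).length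

def maxdes (π : List (Finset ℕ)) : ℕ :=
  ((List.range (π.length - 1)).filter
    (fun i => maxB (π.getD (i + 1) ∅) < maxB (π.getD i ∅))).length

noncomputable def pdes (π : List (Finset ℕ)) : ℕ :=
  ((List.range (π.length - 1)).filter
    (fun i => maxB (π.getD (i + 1) ∅) < minB (π.getD i ∅))).length

def Avoids12 (w : List ℕ) : Prop :=
  ¬ ∃ i j : ℕ, i < j ∧ j < w.length ∧ w.getD i 0 < w.getD j 0

def Avoids21 (w : List ℕ) : Prop :=
  ¬ ∃ i j : ℕ, i < j ∧ j < w.length ∧ w.getD j 0 < w.getD i 0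

def Avoids123 (w : List ℕ) : Prop :=
  ¬ ∃ i j k : ℕ, i < j ∧ j < k ∧ k < w.length ∧
    w.getD i 0 < w.getD j 0 ∧ w.getD j 0 < w.getD k 0

def Avoids132 (w : List ℕ) : Prop :=
  ¬ ∃ i j k : ℕ, i < j ∧ j < k ∧ k < w.length ∧
    w.getD i 0 < w.getD k 0 ∧ w.getD k 0 < w.getD j 0

def Avoids213 (w : List ℕ) : Prop :=
  ¬ ∃ i j k : ℕ, i < j ∧ j < k ∧ k < w.length ∧
    w.getD j 0 < w.getD i 0 ∧ w.getD i 0 < w.getD k 0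

def Avoids312 (w : List ℕ) : Prop :=
  ¬ ∃ i j k : ℕ, i < j ∧ j < k ∧ k < w.length ∧
    w.getD j 0 < w.getD k 0 ∧ w.getD k 0 < w.getD i 0

def Avoids321 (w : List ℕ) : Prop :=
  ¬ ∃ i j k : ℕ, i < j ∧ j < k ∧ k < w.length ∧
    w.getD k 0 < w.getD j 0 ∧ w.getD j 0 < w.getD i 0

/-- reverse-complement of an ordered set partition of `[n]` -/
def rcomp (n : ℕ) (π : List (Finset ℕ)) : List (Finset ℕ) :=
  (π.map (fun B => B.image (fun a => n + 1 - a))).reverse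

lemma minB_eq {B : Finset ℕ} (hB : B.Nonempty) : minB B = B.min' hB := by
  apply le_antisymm
  · exact Nat.sInf_le (B.min'_mem hB)
  · exact B.min'_le _ (Nat.sInf_mem (⟨B.min' hB, by exact_mod_cast B.min'_mem hB⟩ : (B : Set ℕ).Nonempty))

lemma maxB_eq {B : Finset ℕ} (hB : B.Nonempty) : maxB B = B.max' hB := by
  apply le_antisymm
  · exact Finset.sup_le fun b hb => B.le_max' b hb
  · exact Finset.le_sup (f := id) (B.max'_mem hB)

lemma minB_mem {B : Finset ℕ} (hB : B.Nonempty) : minB B ∈ B := by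
  rw [minB_eq hB]; exact B.min'_mem hB

lemma maxB_mem {B : Finset ℕ} (hB : B.Nonempty) : maxB B ∈ B := by
  rw [maxB_eq hB]; exact B.max'_mem hB

lemma minB_le_maxB {B : Finset ℕ} (hB : B.Nonempty) : minB B ≤ maxB B := by
  rw [maxB_eq hB]; exact B.le_max' _ (minB_mem hB)

lemma sort_getD_zero {B : Finset ℕ} (hB : B.Nonempty) :
    (Finset.sort B (· ≤ ·)).getD 0 0 = minB B := by
  have hl : 0 < (Finset.sort B (· ≤ ·)).length := by
    rw [Finset.length_sort]; exact Finset.card_pos.mpr hB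
  rw [List.getD_eq_getElem _ _ hl, minB_eq hB]
  exact Finset.sorted_zero_eq_min'

lemma sort_getD_last {B : Finset ℕ} (hB : B.Nonempty) :
    (Finset.sort B (· ≤ ·)).getD (B.card - 1) 0 = maxB B := by
  have hl : B.card - 1 < (Finset.sort B (· ≤ ·)).length := by
    rw [Finset.length_sort]; have := Finset.card_pos.mpr hB; omega
  rw [List.getD_eq_getElem _ _ hl, maxB_eq hB]
  have := @Finset.sorted_last_eq_max' ℕ _ B (by rw [Finset.length_sort] at hl ⊢; omega)
  simpa [Finset.length_sort] using this

lemma filter_range_succ (p : ℕ → Bool) (m : ℕ) :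
    ((List.range (m+1)).filter p).length
      = (if p 0 then 1 else 0) + ((List.range m).filter (fun i => p (i+1))).length := by
  rw [List.range_succ_eq_map, List.filter_cons]
  rcases hp : p 0 with _ | _ <;>
    simp [hp, List.filter_map, Function.comp_def, Nat.succ_eq_add_one] <;> omega

lemma desCount_cons (a b : ℕ) (t : List ℕ) :
    desCount (a :: b :: t) = (if b < a then 1 else 0) + desCount (b :: t) := by
  show ((List.range (t.length + 1)).filter _).length = _
  rw [filter_range_succ, desCount]
  simp only [List.getD_cons_succ, List.getD_cons_zero, List.length_cons, Nat.add_sub_cancel, decide_eq_true_eq]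

lemma desCount_sorted : ∀ {w : List ℕ}, List.Pairwise (· ≤ ·) w → desCount w = 0
  | [], _ => rfl
  | [_], _ => rfl
  | (a :: b :: t), hw => by
    rw [desCount_cons, desCount_sorted (List.Pairwise.of_cons hw), if_neg]
    exact not_lt.mpr (List.rel_of_pairwise_cons hw List.mem_cons_self)

lemma desCount_append_chain : ∀ (u : List ℕ), List.Pairwise (· ≤ ·) u → ∀ (b : ℕ) (t : List ℕ),
    desCount (u ++ b :: t) = (if b < u.getLastD b then 1 else 0) + desCount (b :: t)
  | [], _, b, t => by simp
  | [x], _, b, t => by simpa using desCount_cons x b t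
  | (x :: y :: u'), hu, b, t => by
    have hxy : x ≤ y := List.rel_of_pairwise_cons hu List.mem_cons_self
    have := desCount_append_chain (y :: u') (List.Pairwise.of_cons hu) b t
    calc desCount (x :: y :: (u' ++ b :: t))
        = (if y < x then 1 else 0) + desCount (y :: (u' ++ b :: t)) := desCount_cons _ _ _
      _ = desCount ((y :: u') ++ b :: t) := by rw [if_neg (not_lt.mpr hxy), Nat.zero_add]; rfl
      _ = (if b < (y :: u').getLastD b then 1 else 0) + desCount (b :: t) := this
      _ = (if b < (x :: y :: u').getLastD b then 1 else 0) + desCount (b :: t) := by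
          rw [List.getLastD_cons, List.getLastD_cons, List.getLastD_cons]

lemma word_nil : word [] = [] := rfl
lemma word_cons (B : Finset ℕ) (l : List (Finset ℕ)) :
    word (B :: l) = Finset.sort B (· ≤ ·) ++ word l := by simp [word]
lemma word_append (l1 l2 : List (Finset ℕ)) : word (l1 ++ l2) = word l1 ++ word l2 := by
  simp [word]

lemma sort_getLastD {B : Finset ℕ} (hB : B.Nonempty) (d : ℕ) :
    (Finset.sort B (· ≤ ·)).getLastD d = maxB B := by
  have hl : 0 < (Finset.sort B (· ≤ ·)).length := by
    rw [Finset.length_sort]; exact Finset.card_pos.mpr hB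
  have h0 : (Finset.sort B (· ≤ ·)) ≠ [] := List.ne_nil_of_length_pos hl
  rw [List.getLastD_eq_getLast?, List.getLast?_eq_getLast h0, Option.getD_some,
    List.getLast_eq_getElem, ← List.getD_eq_getElem _ 0 (by omega), Finset.length_sort]
  exact sort_getD_last hB

lemma key (π : List (Finset ℕ)) (hne : ∀ B ∈ π, B.Nonempty) (hd : π.Pairwise Disjoint)
    (ha : Avoids132 (word π)) :
    ∀ i : ℕ, i + 1 < π.length →
      minB (π.getD (i + 1) ∅) < maxB (π.getD i ∅) →
      minB (π.getD (i + 1) ∅) < minB (π.getD i ∅) := by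
  intro i hi hlt
  have hi' : i < π.length := by omega
  rw [List.getD_eq_getElem _ _ hi, List.getD_eq_getElem _ _ hi'] at hlt ⊢
  set Bi := π[i] with hBidef
  set Bi1 := π[i+1] with hBi1def
  have hBi : Bi.Nonempty := hne _ (List.getElem_mem hi')
  have hBi1 : Bi1.Nonempty := hne _ (List.getElem_mem hi)
  have hdisj : Disjoint Bi Bi1 := (List.pairwise_iff_getElem.mp hd) i (i+1) hi' hi (by omega)
  by_contra hc
  push_neg at hc
  have hne' : minB Bi ≠ minB Bi1 := by
    intro he
    exact (Finset.disjoint_left.mp hdisj (minB_mem hBi)) (he ▸ minB_mem hBi1)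
  have h1 : minB Bi < minB Bi1 := lt_of_le_of_ne hc hne'
  -- decompose π
  have hπ : π = π.take i ++ Bi :: Bi1 :: π.drop (i+2) := by
    conv_lhs => rw [← List.take_append_drop i π]
    rw [List.drop_eq_getElem_cons hi', List.drop_eq_getElem_cons hi]
  set u := word (π.take i) with hu
  set c := Bi.card with hc'
  have hc2 : 2 ≤ c := by
    rw [hc']
    exact Finset.one_lt_card.mpr ⟨minB Bi, minB_mem hBi, maxB Bi, maxB_mem hBi,
      fun he => absurd (he ▸ h1) (not_lt.mpr (le_of_lt hlt))⟩
  have hw : word π = u ++ (Finset.sort Bi (· ≤ ·) ++ (Finset.sort Bi1 (· ≤ ·) ++ word (π.drop (i+2)))) := by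
    conv_lhs => rw [hπ]
    rw [word_append, word_cons, word_cons]
  have hlenBi : (Finset.sort Bi (· ≤ ·)).length = c := Finset.length_sort _
  have hlenBi1 : 0 < (Finset.sort Bi1 (· ≤ ·)).length := by
    rw [Finset.length_sort]; exact Finset.card_pos.mpr hBi1
  set L := u.length with hL
  have hlen : L + c + 1 ≤ (word π).length := by
    rw [hw]; simp only [List.length_append, hlenBi]; omega
  have g1 : (word π).getD L 0 = minB Bi := by
    rw [hw, List.getD_append_right _ _ _ _ (le_refl L), Nat.sub_self,
      List.getD_append _ _ _ _ (by omega), sort_getD_zero hBi]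
  have g2 : (word π).getD (L + (c-1)) 0 = maxB Bi := by
    rw [hw, List.getD_append_right _ _ _ _ (by omega), Nat.add_sub_cancel_left,
      List.getD_append _ _ _ _ (by omega)]
    exact sort_getD_last hBi
  have g3 : (word π).getD (L + c) 0 = minB Bi1 := by
    rw [hw, List.getD_append_right _ _ _ _ (by omega), Nat.add_sub_cancel_left,
      List.getD_append_right _ _ _ _ (by omega), hlenBi, Nat.sub_self,
      List.getD_append _ _ _ _ hlenBi1, sort_getD_zero hBi1]
  exact ha ⟨L, L + (c-1), L + c, by omega, by omega, by omega,
    by rw [g1, g3]; exact h1, by rw [g2, g3]; exact hlt⟩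

lemma mindes_cons (B C : Finset ℕ) (rest : List (Finset ℕ)) :
    mindes (B :: C :: rest) = (if minB C < minB B then 1 else 0) + mindes (C :: rest) := by
  show ((List.range (rest.length + 1)).filter _).length = _
  rw [filter_range_succ, mindes]
  simp only [List.getD_cons_succ, List.getD_cons_zero, List.length_cons, Nat.add_sub_cancel,
    decide_eq_true_eq]

lemma des_eq_mindes (π : List (Finset ℕ)) (hne : ∀ B ∈ π, B.Nonempty)
    (hk : ∀ i : ℕ, i + 1 < π.length →
      minB (π.getD (i + 1) ∅) < maxB (π.getD i ∅) →
      minB (π.getD (i + 1) ∅) < minB (π.getD i ∅)) :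
    desCount (word π) = mindes π := by
  induction π with
  | nil => rfl
  | cons B rest ih =>
    cases rest with
    | nil =>
      have h0 : desCount (word [B]) = 0 := by
        rw [word_cons, word_nil, List.append_nil]
        exact desCount_sorted (Finset.pairwise_sort _ _)
      rw [h0]; rfl
    | cons C rest' =>
      have hBne : B.Nonempty := hne _ List.mem_cons_self
      have hCne : C.Nonempty := hne _ (List.mem_cons_of_mem _ List.mem_cons_self)
      have hne' : ∀ D ∈ C :: rest', D.Nonempty := fun D hD => hne _ (List.mem_cons_of_mem _ hD)
      have hk' : ∀ i : ℕ, i + 1 < (C :: rest').length →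
          minB ((C :: rest').getD (i + 1) ∅) < maxB ((C :: rest').getD i ∅) →
          minB ((C :: rest').getD (i + 1) ∅) < minB ((C :: rest').getD i ∅) := by
        intro i hi
        have := hk (i+1) (by simpa using Nat.succ_lt_succ hi)
        simpa [List.getD_cons_succ] using this
      have hCs : Finset.sort C (· ≤ ·) ≠ [] := by
        apply List.ne_nil_of_length_pos
        rw [Finset.length_sort]; exact Finset.card_pos.mpr hCne
      have hvd : word (C :: rest') = minB C :: ((Finset.sort C (· ≤ ·)).tail ++ word rest') := by
        rw [word_cons, ← List.cons_head_tail hCs, List.cons_append]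
        congr 1
        · rw [List.head_eq_getElem, ← List.getD_eq_getElem _ 0 (by
            rw [Finset.length_sort]; exact Finset.card_pos.mpr hCne)]
          exact sort_getD_zero hCne
      rw [word_cons, hvd, desCount_append_chain _ (Finset.pairwise_sort _ _),
        sort_getLastD hBne, ← hvd, ih hne' hk', mindes_cons]
      congr 1
      have hiff : minB C < maxB B ↔ minB C < minB B := by
        constructor
        · intro hlt
          have := hk 0 (by simp) (by simpa using hlt)
          simpa using this
        · intro hlt; exact lt_of_lt_of_le hlt (minB_le_maxB hBne)
      by_cases hcc : minB C < minB B
      · rw [if_pos (hiff.mpr hcc), if_pos hcc]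
      · rw [if_neg (fun hh => hcc (hiff.mp hh)), if_neg hcc]

theorem stmt6 (n : ℕ) (π : List (Finset ℕ)) (h : IsOSP n π)
    (ha : Avoids132 (word π)) :
    (∀ i : ℕ, i + 1 < π.length →
      minB (π.getD (i + 1) ∅) < maxB (π.getD i ∅) →
      minB (π.getD (i + 1) ∅) < minB (π.getD i ∅)) ∧
    desCount (word π) = mindes π := by
  obtain ⟨hne, hd, -⟩ := h
  have hk := key π hne hd ha
  exact ⟨hk, des_eq_mindes π hne hk⟩
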